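/- Let G be a simple graph, u, v adjacent vertices of G, and G' = G[u→v] the graph obtained by the Kelmans operation. If G' contains a path on k vertices, then G contains a path on at least k vertices. -/

import Mathlib

/-- The Kelmans operation `G[u → v]`: every edge `wu` with `w ∈ N(u) \\ N[v]` is removed
and replaced by the edge `wv`. -/
def kelmans {V : Type*} (G : SimpleGraph V) (u v : V) : SimpleGraph V where
  Adj x y := x ≠ y ∧
    ((G.Adj x y ∧ ¬ ((x = u ∧ G.Adj u y ∧ ¬ G.Adj v y ∧ y ≠ v) ∨
                     (y = u ∧ G.Adj u x ∧ ¬ G.Adj v x ∧ x ≠ v))) ∨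
     ((x = v ∧ G.Adj u y ∧ ¬ G.Adj v y ∧ y ≠ v) ∨
      (y = v ∧ G.Adj u x ∧ ¬ G.Adj v x ∧ x ≠ v)))
  symm := by
    refine ⟨?_⟩
    rintro x y ⟨hxy, h⟩
    refine ⟨hxy.symm, ?_⟩
    have hsymm : G.Adj x y ↔ G.Adj y x := ⟨SimpleGraph.Adj.symm, SimpleGraph.Adj.symm⟩
    tauto
  loopless := by refine ⟨?_⟩; rintro x ⟨h, -⟩; exact h rfl

namespace KelmansAux

open List

variable {V : Type*} {G : SimpleGraph V} {u v : V}

lemma kel_adj_iff {x y : V} : (kelmans G u v).Adj x y ↔ x ≠ y ∧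
    ((G.Adj x y ∧ ¬ ((x = u ∧ G.Adj u y ∧ ¬ G.Adj v y ∧ y ≠ v) ∨
                     (y = u ∧ G.Adj u x ∧ ¬ G.Adj v x ∧ x ≠ v))) ∨
     ((x = v ∧ G.Adj u y ∧ ¬ G.Adj v y ∧ y ≠ v) ∨
      (y = v ∧ G.Adj u x ∧ ¬ G.Adj v x ∧ x ≠ v))) := Iff.rfl

lemma kel_adj_of_ne {x y : V} (h : (kelmans G u v).Adj x y) (hx : x ≠ v) (hy : y ≠ v) :
    G.Adj x y := by
  rw [kel_adj_iff] at h
  obtain ⟨-, h⟩ := h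
  rcases h with ⟨h, -⟩ | (⟨rfl, -⟩ | ⟨rfl, -⟩)
  · exact h
  · exact absurd rfl hx
  · exact absurd rfl hy

lemma kel_adj_u {x : V} (huv : G.Adj u v) (h : (kelmans G u v).Adj x u) (hx : x ≠ v) :
    G.Adj u x ∧ G.Adj v x := by
  rw [kel_adj_iff] at h
  obtain ⟨hne, h⟩ := h
  rcases h with ⟨ha, hb⟩ | (⟨rfl, -⟩ | ⟨huv', -⟩)
  · refine ⟨ha.symm, ?_⟩
    by_contra hvx
    exact hb (Or.inr ⟨rfl, ha.symm, hvx, hx⟩)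
  · exact absurd rfl hx
  · exact absurd huv' huv.ne

lemma kel_adj_u' {y : V} (huv : G.Adj u v) (h : (kelmans G u v).Adj u y) (hy : y ≠ v) :
    G.Adj u y ∧ G.Adj v y := kel_adj_u huv h.symm hy

lemma kel_adj_v {s : V} (h : (kelmans G u v).Adj s v) :
    G.Adj s v ∨ (G.Adj u s ∧ ¬ G.Adj v s ∧ s ≠ v) := by
  rw [kel_adj_iff] at h
  obtain ⟨hne, h⟩ := h
  rcases h with ⟨ha, -⟩ | (⟨rfl, -, -, hvv⟩ | ⟨-, h2⟩)
  · exact Or.inl ha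
  · exact absurd rfl hvv
  · exact Or.inr h2

lemma chain_transfer : ∀ (m : List V), v ∉ m → m.IsChain (kelmans G u v).Adj →
    m.IsChain G.Adj := by
  intro m
  induction m with
  | nil => intro _ _; exact List.isChain_nil
  | cons a t ih =>
    intro hv hc
    cases t with
    | nil => exact List.isChain_singleton a
    | cons b t' =>
      rw [List.isChain_cons_cons] at hc ⊢
      have ha : a ≠ v := fun h => hv (by simp [h])
      have hb : b ≠ v := fun h => hv (by simp [h])
      have ht : v ∉ b :: t' := fun h => hv (List.mem_cons_of_mem _ h)
      exact ⟨kel_adj_of_ne hc.1 ha hb, ih ht hc.2⟩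

lemma walk_of_chain : ∀ (l : List V) (a : V), (a :: l).IsChain G.Adj →
    ∃ (b : V) (w : G.Walk a b), w.support = a :: l := by
  intro l
  induction l with
  | nil => intro a _; exact ⟨a, .nil, rfl⟩
  | cons b t ih =>
    intro a hc
    rw [List.isChain_cons_cons] at hc
    obtain ⟨c, w, hwsup⟩ := ih b hc.2
    exact ⟨c, .cons hc.1 w, by simp [hwsup]⟩

/-- The main case: the edge from `v` towards the right (`v w`) is a "new" edge,
and if `u` occurs to the left of `v`, then the left edge of `v` is an old edge. -/
lemma lemR (huv : G.Adj u v) (A B' : List V) (w : V)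
    (hn : (A ++ v :: w :: B').Nodup)
    (hc : (A ++ v :: w :: B').IsChain (kelmans G u v).Adj)
    (hw : G.Adj u w) (hvw : ¬ G.Adj v w)
    (hL : u ∈ A → ∀ s ∈ A.getLast?, G.Adj s v ∨ s = u) :
    ∃ l' : List V, l'.IsChain G.Adj ∧ l'.Nodup ∧ (A ++ v :: w :: B').length ≤ l'.length := by
  classical
  have huvne : u ≠ v := huv.ne
  have huw : u ≠ w := hw.ne'.symm
  have hmem : A.Nodup ∧ ((¬v = w ∧ v ∉ B') ∧ w ∉ B' ∧ B'.Nodup) ∧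
      ∀ ⦃a : V⦄, a ∈ A → ¬a = v ∧ ¬a = w ∧ a ∉ B' := by
    have := hn
    simp [List.nodup_append, List.nodup_cons, List.disjoint_left] at this
    exact ⟨this.1, this.2.1, fun a ha => ⟨(this.2.2 a ha).1, (this.2.2 a ha).2.1,
      fun hB => (this.2.2 a ha).2.2 a hB rfl⟩⟩
  have hvA : v ∉ A := fun h => (hmem.2.2 h).1 rfl
  have hvB : v ∉ B' := hmem.2.1.1.2
  have hvwne : v ≠ w := hmem.2.1.1.1
  rw [List.isChain_append] at hc
  obtain ⟨cA, cV, hAv⟩ := hc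
  rw [List.isChain_cons_cons] at cV
  obtain ⟨-, cW⟩ := cV
  have hAv' : ∀ s ∈ A.getLast?, (kelmans G u v).Adj s v := fun s hs => hAv s hs v rfl
  have hvWB : v ∉ w :: B' := by simp [hvB, hvwne]
  have cWG : (w :: B').IsChain G.Adj := chain_transfer _ hvWB cW
  have cAG : A.IsChain G.Adj := chain_transfer _ hvA cA
  by_cases huA : u ∈ A
  · -- case (iii): u to the left of v; left edge of v is old; swap
    obtain ⟨P, Q, rfl⟩ := List.append_of_mem huA
    have hnA := hmem.1
    have huP : u ∉ P ∧ u ∉ Q := by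
      rw [List.nodup_append] at hnA
      refine ⟨fun h => hnA.2.2 u h u (by simp) rfl, by simpa using (List.nodup_cons.1 hnA.2.1).1⟩
    rw [List.isChain_append] at cA
    obtain ⟨cP, cUQ, hPu⟩ := cA
    have hvP : v ∉ P := fun h => hvA (by simp [h])
    have hvQ : v ∉ Q := fun h => hvA (by simp [h])
    have hPfact : ∀ p ∈ P.getLast?, G.Adj u p ∧ G.Adj v p := by
      intro p hp
      have hpA : p ∈ P := by
        rw [Option.mem_def, List.getLast?_eq_some_iff] at hp
        obtain ⟨ys, rfl⟩ := hp
        simp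
      exact kel_adj_u huv (hPu p (by simpa using hp) u rfl) (fun h => hvP (h ▸ hpA))
    rw [List.isChain_cons] at cUQ
    obtain ⟨hUQhead, cQ⟩ := cUQ
    have hQfact : ∀ q ∈ Q.head?, G.Adj u q ∧ G.Adj v q := by
      intro q hq
      have hqQ : q ∈ Q := by
        cases Q with
        | nil => simp at hq
        | cons a t => simp at hq; simp [hq]
      exact kel_adj_u' huv (hUQhead q hq) (fun h => hvQ (h ▸ hqQ))
    have cQG : Q.IsChain G.Adj := chain_transfer _ hvQ cQ
    refine ⟨P ++ v :: (Q.reverse ++ u :: w :: B'), ?_, ?_, by simp⟩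
    · rw [List.isChain_append]
      refine ⟨chain_transfer _ hvP cP, ?_, ?_⟩
      · rw [List.isChain_cons]
        constructor
        · intro y hy
          rcases Q with _ | ⟨q, Q'⟩
          · simp at hy; subst hy; exact huv.symm
          · rw [List.head?_append_of_ne_nil _ (by simp)] at hy
            rw [List.head?_reverse] at hy
            -- y is the last of Q; from hL it is adjacent to v (it can't be u)
            have hylast : (P ++ u :: q :: Q').getLast? = some y := by
              rw [List.getLast?_append]
              have : (u :: q :: Q').getLast? = some y := by
                rw [show u :: q :: Q' = [u] ++ q :: Q' from rfl, List.getLast?_append]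
                simp [Option.mem_def.1 hy]
              simp [this]
            have hyQ : y ∈ q :: Q' := by
              rw [Option.mem_def, List.getLast?_eq_some_iff] at hy
              obtain ⟨ys, hys⟩ := hy
              rw [hys]; simp
            have : G.Adj y v ∨ y = u := hL huA y (by simpa using hylast)
            rcases this with h | h
            · exact h.symm
            · exact absurd (h ▸ hyQ) huP.2
        · rw [List.isChain_append]
          refine ⟨?_, ?_, ?_⟩
          · rw [List.isChain_reverse]
            exact cQG.imp fun a b h => h.symm
          · rw [List.isChain_cons_cons]
            exact ⟨hw, cWG⟩
          · intro x hx y hy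
            simp only [List.head?_cons, Option.mem_def, Option.some.injEq] at hy
            subst hy
            rw [List.getLast?_reverse] at hx
            exact (hQfact x hx).1.symm
      · intro x hx y hy
        simp only [List.head?_cons, Option.mem_def, Option.some.injEq] at hy
        subst hy
        exact (hPfact x hx).2.symm
    · have hp : (P ++ v :: (Q.reverse ++ u :: w :: B')) ~ ((P ++ u :: Q) ++ v :: w :: B') := by
        rw [List.perm_iff_count]
        intro x
        simp [List.count_append, List.count_cons, List.count_reverse]
        omega
      exact hp.symm.nodup hn
  · by_cases huB : u ∈ B'
    · -- case (ii): u to the right of v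
      obtain ⟨C, D, rfl⟩ := List.append_of_mem huB
      have hvC : v ∉ C := fun h => hvB (by simp [h])
      have hvD : v ∉ D := fun h => hvB (by simp [h])
      have hnB := hmem.2.1.2.2
      rw [List.nodup_append] at hnB
      have huC : u ∉ C := fun h => hnB.2.2 u h u (by simp) rfl
      have huD : u ∉ D := (List.nodup_cons.1 hnB.2.1).1
      have hwC : w ∉ C := fun h => hmem.2.1.2.1 (by simp [h])
      have cW2 : ((w :: C) ++ u :: D).IsChain (kelmans G u v).Adj := by simpa using cW
      rw [List.isChain_append] at cW2
      obtain ⟨cWC, cUD, hxu⟩ := cW2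
      have hvWC : v ∉ w :: C := by simp [hvC, hvwne]
      have cWCG : (w :: C).IsChain G.Adj := chain_transfer _ hvWC cWC
      -- the last element of w :: C
      have hWCne : (w :: C) ≠ [] := by simp
      set x := (w :: C).getLast hWCne with hxdef
      have hxlast : (w :: C).getLast? = some x := List.getLast?_eq_getLast hWCne
      have hxmem : x ∈ w :: C := List.getLast_mem hWCne
      have hxv : x ≠ v := fun h => hvWC (h ▸ hxmem)
      have hxfact : G.Adj u x ∧ G.Adj v x :=
        kel_adj_u huv (hxu x (by simpa using hxlast) u rfl) hxv
      have hCne : C ≠ [] := by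
        intro h
        subst h
        simp only [List.getLast_singleton] at hxdef
        exact hvw (hxdef ▸ hxfact.2)
      rw [List.isChain_cons] at cUD
      obtain ⟨hUDhead, cD⟩ := cUD
      have hDfact : ∀ y ∈ D.head?, G.Adj u y ∧ G.Adj v y := by
        intro y hy
        have hyD : y ∈ D := by
          cases D with
          | nil => simp at hy
          | cons a t => simp at hy; simp [hy]
        exact kel_adj_u' huv (hUDhead y hy) (fun h => hvD (h ▸ hyD))
      have cDG : D.IsChain G.Adj := chain_transfer _ hvD cD
      have cUDG : (u :: D).IsChain G.Adj := by
        rw [List.isChain_cons]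
        exact ⟨fun y hy => (hDfact y hy).1, cDG⟩
      by_cases hLo : ∀ s ∈ A.getLast?, G.Adj s v
      · -- (iia): left edge of v old or absent
        refine ⟨A ++ v :: ((w :: C).reverse ++ u :: D), ?_, ?_, by simp⟩
        · rw [List.isChain_append]
          refine ⟨cAG, ?_, ?_⟩
          · rw [List.isChain_cons]
            constructor
            · intro y hy
              rw [List.head?_append_of_ne_nil _ (by simp), List.head?_reverse, hxlast] at hy
              simp only [Option.mem_def, Option.some.injEq] at hy
              subst hy
              exact hxfact.2
            · rw [List.isChain_append]
              refine ⟨?_, cUDG, ?_⟩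
              · rw [List.isChain_reverse]
                exact cWCG.imp fun a b h => h.symm
              · intro p hp y hy
                simp only [List.head?_cons, Option.mem_def, Option.some.injEq] at hy
                subst hy
                rw [List.getLast?_reverse] at hp
                simp only [List.head?_cons, Option.mem_def, Option.some.injEq] at hp
                subst hp
                exact hw.symm
          · intro s hs y hy
            simp only [List.head?_cons, Option.mem_def, Option.some.injEq] at hy
            subst hy
            exact hLo s hs
        · have hp : (A ++ v :: ((w :: C).reverse ++ u :: D)) ~
              (A ++ v :: w :: (C ++ u :: D)) := by
            rw [List.perm_iff_count]
            intro y
            simp [List.count_append, List.count_cons, List.count_reverse]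
            omega
          exact hp.symm.nodup hn
      · -- (iib): left edge of v is new
        push_neg at hLo
        obtain ⟨s, hs, hsv⟩ := hLo
        have hsA : s ∈ A := by
          rw [Option.mem_def, List.getLast?_eq_some_iff] at hs
          obtain ⟨ys, rfl⟩ := hs
          simp
        have hsnew : G.Adj u s ∧ ¬ G.Adj v s ∧ s ≠ v := by
          rcases kel_adj_v (hAv' s hs) with h | h
          · exact absurd h hsv
          · exact h
        refine ⟨A ++ u :: ((w :: C) ++ v :: D), ?_, ?_, by simp⟩
        · rw [List.isChain_append]
          refine ⟨cAG, ?_, ?_⟩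
          · rw [List.isChain_cons]
            constructor
            · intro y hy
              rw [List.head?_append_of_ne_nil _ (by simp)] at hy
              simp only [List.head?_cons, Option.mem_def, Option.some.injEq] at hy
              subst hy
              exact hw
            · rw [List.isChain_append]
              refine ⟨cWCG, ?_, ?_⟩
              · rw [List.isChain_cons]
                exact ⟨fun y hy => (hDfact y hy).2, cDG⟩
              · intro p hp y hy
                simp only [List.head?_cons, Option.mem_def, Option.some.injEq] at hy
                subst hy
                rw [hxlast] at hp
                simp only [Option.mem_def, Option.some.injEq] at hp
                subst hp
                exact hxfact.2.symm
          · intro p hp y hy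
            simp only [List.head?_cons, Option.mem_def, Option.some.injEq] at hy
            subst hy
            rw [hs] at hp
            simp only [Option.mem_def, Option.some.injEq] at hp
            subst hp
            exact hsnew.1.symm
        · have hp : (A ++ u :: ((w :: C) ++ v :: D)) ~
              (A ++ v :: w :: (C ++ u :: D)) := by
            rw [List.perm_iff_count]
            intro y
            simp [List.count_append, List.count_cons]
            omega
          exact hp.symm.nodup hn
    · -- case (i): u not on the path
      have huWB : u ∉ w :: B' := by simp [huB, huw]
      have hul : u ∉ A ++ v :: w :: B' := by simp [huA, huB, huw, huvne]
      by_cases hLo : ∀ s ∈ A.getLast?, G.Adj s v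
      · -- (ia): insert u between v and w
        refine ⟨A ++ v :: u :: w :: B', ?_, ?_, by simp⟩
        · rw [List.isChain_append]
          refine ⟨cAG, ?_, ?_⟩
          · rw [List.isChain_cons_cons]
            refine ⟨huv.symm, ?_⟩
            rw [List.isChain_cons_cons]
            exact ⟨hw, cWG⟩
          · intro s hs y hy
            simp only [List.head?_cons, Option.mem_def, Option.some.injEq] at hy
            subst hy
            exact hLo s hs
        · have hp : (A ++ v :: u :: w :: B') ~ u :: (A ++ v :: w :: B') := by
            rw [List.perm_iff_count]
            intro y
            simp [List.count_append, List.count_cons]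
            omega
          exact hp.symm.nodup (List.nodup_cons.2 ⟨hul, hn⟩)
      · -- (ib): replace v by u
        push_neg at hLo
        obtain ⟨s, hs, hsv⟩ := hLo
        have hsnew : G.Adj u s ∧ ¬ G.Adj v s ∧ s ≠ v := by
          rcases kel_adj_v (hAv' s hs) with h | h
          · exact absurd h hsv
          · exact h
        refine ⟨A ++ u :: w :: B', ?_, ?_, by simp⟩
        · rw [List.isChain_append]
          refine ⟨cAG, ?_, ?_⟩
          · rw [List.isChain_cons_cons]
            exact ⟨hw, cWG⟩
          · intro p hp y hy
            simp only [List.head?_cons, Option.mem_def, Option.some.injEq] at hy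
            subst hy
            rw [hs] at hp
            simp only [Option.mem_def, Option.some.injEq] at hp
            subst hp
            exact hsnew.1.symm
        · have hp : (A ++ u :: w :: B') ~ u :: (A ++ w :: B') := List.perm_middle
          refine hp.symm.nodup (List.nodup_cons.2 ⟨?_, ?_⟩)
          · intro h
            rcases List.mem_append.1 h with h | h
            · exact huA h
            · exact huWB h
          · have hsub : (A ++ w :: B') <+ (A ++ v :: w :: B') :=
              (List.sublist_cons_self v (w :: B')).append_left A
            exact hsub.nodup hn

lemma core (huv : G.Adj u v) (l : List V) (hc : l.IsChain (kelmans G u v).Adj)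
    (hn : l.Nodup) :
    ∃ l' : List V, l'.IsChain G.Adj ∧ l'.Nodup ∧ l.length ≤ l'.length := by
  classical
  by_cases hv : v ∈ l
  · obtain ⟨A, B, rfl⟩ := List.append_of_mem hv
    have hcrev : (A ++ v :: B).reverse.IsChain (kelmans G u v).Adj := by
      rw [List.isChain_reverse]
      exact hc.imp fun a b h => h.symm
    have hnrev : (A ++ v :: B).reverse.Nodup := List.nodup_reverse.2 hn
    have hc' := hc
    rw [List.isChain_append] at hc'
    obtain ⟨cA, cVB, hAv⟩ := hc'
    have hAv' : ∀ s ∈ A.getLast?, (kelmans G u v).Adj s v := fun s hs => hAv s hs v rfl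
    rw [List.isChain_cons] at cVB
    obtain ⟨hvhead, cB⟩ := cVB
    have hmem : A.Nodup ∧ (v ∉ B ∧ B.Nodup) ∧
        ∀ ⦃a : V⦄, a ∈ A → ¬a = v ∧ a ∉ B := by
      have := hn
      simp [List.nodup_append, List.nodup_cons, List.disjoint_left] at this
      exact ⟨this.1, this.2.1, fun a ha => ⟨(this.2.2 a ha).1,
        fun hB => (this.2.2 a ha).2 a hB rfl⟩⟩
    have hvA : v ∉ A := fun h => (hmem.2.2 h).1 rfl
    have hvB : v ∉ B := hmem.2.1.1
    -- helper for the case where the left edge of v is new: apply lemR to the reverse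
    have hRev : ∀ (s : V), A.getLast? = some s → G.Adj u s → ¬ G.Adj v s →
        (∀ y ∈ B.head?, G.Adj v y) →
        ∃ l' : List V, l'.IsChain G.Adj ∧ l'.Nodup ∧ (A ++ v :: B).length ≤ l'.length := by
      intro s hs hus hvs hRold
      obtain ⟨A₀, rfl⟩ := List.getLast?_eq_some_iff.1 hs
      have hform : ((A₀ ++ [s]) ++ v :: B).reverse = B.reverse ++ v :: s :: A₀.reverse := by
        simp
      rw [hform] at hcrev hnrev
      have hLrev : u ∈ B.reverse → ∀ t ∈ B.reverse.getLast?, G.Adj t v ∨ t = u := by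
        intro _ t ht
        rw [List.getLast?_reverse] at ht
        exact Or.inl (hRold t ht).symm
      obtain ⟨l', hc1, hn1, hl1⟩ := lemR huv B.reverse A₀.reverse s hnrev hcrev hus hvs hLrev
      refine ⟨l', hc1, hn1, le_trans (le_of_eq ?_) hl1⟩
      simp
      omega
    rcases hB : B with _ | ⟨w, B'⟩
    · -- B = []
      subst hB
      rcases hA : A.getLast? with _ | s
      · -- A = []
        have : A = [] := List.getLast?_eq_none_iff.1 hA
        subst this
        exact ⟨[v], by simp, by simp, by simp⟩
      · rcases kel_adj_v (hAv' s hA) with hold | hnew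
        · -- all edges old
          refine ⟨A ++ [v], ?_, hn, le_refl _⟩
          rw [List.isChain_append]
          refine ⟨chain_transfer _ hvA cA, by simp, ?_⟩
          intro p hp y hy
          simp only [List.head?_cons, Option.mem_def, Option.some.injEq] at hy
          subst hy
          rw [hA] at hp
          simp only [Option.mem_def, Option.some.injEq] at hp
          subst hp
          exact hold
        · exact hRev s hA hnew.1 hnew.2.1 (by simp)
    · subst hB
      have hG'vw : (kelmans G u v).Adj v w := hvhead w rfl
      by_cases hvwG : G.Adj v w
      · -- right edge old; look at the left edge
        rcases hA : A.getLast? with _ | s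
        · -- A = [] : all old
          have : A = [] := List.getLast?_eq_none_iff.1 hA
          subst this
          refine ⟨v :: w :: B', ?_, hn, le_refl _⟩
          rw [List.isChain_cons_cons]
          exact ⟨hvwG, chain_transfer _ hvB cB⟩
        · rcases kel_adj_v (hAv' s hA) with hold | hnew
          · -- all old
            refine ⟨A ++ v :: w :: B', ?_, hn, le_refl _⟩
            rw [List.isChain_append]
            refine ⟨chain_transfer _ hvA cA, ?_, ?_⟩
            · rw [List.isChain_cons_cons]
              exact ⟨hvwG, chain_transfer _ hvB cB⟩
            · intro p hp y hy
              simp only [List.head?_cons, Option.mem_def, Option.some.injEq] at hy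
              subst hy
              rw [hA] at hp
              simp only [Option.mem_def, Option.some.injEq] at hp
              subst hp
              exact hold
          · -- left edge new, right edge old : reverse
            refine hRev s hA hnew.1 hnew.2.1 ?_
            intro y hy
            simp only [List.head?_cons, Option.mem_def, Option.some.injEq] at hy
            subst hy
            exact hvwG
      · -- right edge new
        have hw : G.Adj u w := by
          rcases kel_adj_v hG'vw.symm with h | h
          · exact absurd h.symm hvwG
          · exact h.1
        by_cases hLhyp : u ∈ A → ∀ s ∈ A.getLast?, G.Adj s v ∨ s = u
        · exact lemR huv A B' w hn hc hw hvwG hLhyp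
        · -- u ∈ A and left edge of v is new : reverse, with u now on the right
          push_neg at hLhyp
          obtain ⟨huA, s, hs, hsv, hsu⟩ := hLhyp
          have hsnew : G.Adj u s ∧ ¬ G.Adj v s ∧ s ≠ v := by
            rcases kel_adj_v (hAv' s hs) with h | h
            · exact absurd h hsv
            · exact h
          obtain ⟨A₀, rfl⟩ := List.getLast?_eq_some_iff.1 hs
          have hform : ((A₀ ++ [s]) ++ v :: w :: B').reverse =
              (w :: B').reverse ++ v :: s :: A₀.reverse := by simp
          rw [hform] at hcrev hnrev
          have hLrev : u ∈ (w :: B').reverse → ∀ t ∈ (w :: B').reverse.getLast?,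
              G.Adj t v ∨ t = u := by
            intro hu _ _
            exfalso
            rw [List.mem_reverse] at hu
            exact (hmem.2.2 huA).2 hu
          obtain ⟨l', hc1, hn1, hl1⟩ :=
            lemR huv (w :: B').reverse A₀.reverse s hnrev hcrev hsnew.1 hsnew.2.1 hLrev
          refine ⟨l', hc1, hn1, le_trans (le_of_eq ?_) hl1⟩
          simp
          omega
  · exact ⟨l, chain_transfer _ hv hc, hn, le_refl _⟩

end KelmansAux

/-- If `u` and `v` are adjacent and `G[u → v]` contains a path on `k` vertices,
then `G` contains a path on at least `k` vertices. -/
theorem stmt_5 {V : Type*} (G : SimpleGraph V) (u v : V) (huv : G.Adj u v) (k : ℕ)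
    (h : ∃ (a b : V) (w : (kelmans G u v).Walk a b), w.IsPath ∧ w.length + 1 = k) :
    ∃ (a b : V) (w : G.Walk a b), w.IsPath ∧ k ≤ w.length + 1 := by
  obtain ⟨a, b, p, hp, hk⟩ := h
  have hc := p.isChain_adj_support
  have hn := (SimpleGraph.Walk.isPath_def p).1 hp
  obtain ⟨l', hc', hn', hlen⟩ := KelmansAux.core huv p.support hc hn
  have hsup := p.length_support
  have h0 : l' ≠ [] := by
    intro h
    rw [h] at hlen
    simp only [List.length_nil, Nat.le_zero] at hlen
    omega
  obtain ⟨a', t, rfl⟩ := List.exists_cons_of_ne_nil h0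
  obtain ⟨b', w', hs⟩ := KelmansAux.walk_of_chain t a' hc'
  refine ⟨a', b', w', (SimpleGraph.Walk.isPath_def w').2 (hs ▸ hn'), ?_⟩
  have hsup' := w'.length_support
  rw [hs] at hsup'
  omega
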